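/- Set K := σ_lb/σ_ub and suppose θ ∈ (0,1) and η ∈ (0,1) satisfy (1 − θ)(1 − η)K − η > 0. If ‖g − ∇φ(x)‖ ≤ η‖∇φ(x)‖ and 0 < α ≤ 2((1 − θ)(1 − η)K − η)/(L σ_ub (1 − η)), then φ(x − α d) ≤ φ(x) − α θ ⟨d, g⟩, where d := B⁻¹g. -/

import Mathlib

open scoped RealInnerProductSpace
open Matrix

/-- Descent lemma: for a `C¹` function with `L`-Lipschitz gradient,
`φ(x+v) ≤ φ(x) + ⟪∇φ(x), v⟫ + L/2 ‖v‖²`. -/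
lemma stmt4_descent {n : ℕ} (φ : EuclideanSpace ℝ (Fin n) → ℝ) (hφ : ContDiff ℝ 1 φ)
    (L : ℝ)
    (hlip : ∀ a b, ‖gradient φ a - gradient φ b‖ ≤ L * ‖a - b‖)
    (x v : EuclideanSpace ℝ (Fin n)) :
    φ (x + v) ≤ φ x + ⟪gradient φ x, v⟫ + L / 2 * ‖v‖ ^ 2 := by
  have hdiff : ∀ y, HasGradientAt φ (gradient φ y) y := fun y =>
    ((hφ.differentiable one_ne_zero) y).hasGradientAt
  have hline : ∀ t : ℝ, HasDerivAt (fun t : ℝ => x + t • v) v t := by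
    intro t
    simpa using ((hasDerivAt_id t).smul_const v).const_add x
  have hψ : ∀ t : ℝ, HasDerivAt (fun t : ℝ => φ (x + t • v))
      ⟪gradient φ (x + t • v), v⟫ t := by
    intro t
    have := ((hdiff (x + t • v)).hasFDerivAt).comp_hasDerivAt t (hline t)
    simp at this ⊢
    exact this
  set h : ℝ → ℝ := fun t => φ (x + t • v) - t * ⟪gradient φ x, v⟫ - L * ‖v‖ ^ 2 / 2 * t ^ 2
    with hh
  have hd : ∀ t : ℝ, HasDerivAt h
      (⟪gradient φ (x + t • v), v⟫ - ⟪gradient φ x, v⟫ - L * ‖v‖ ^ 2 * t) t := by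
    intro t
    have h1 := ((hψ t).sub (hasDerivAt_mul_const ⟪gradient φ x, v⟫)).sub
      ((hasDerivAt_pow 2 t).const_mul (L * ‖v‖ ^ 2 / 2))
    exact h1.congr_deriv (by simp only [Nat.cast_ofNat, Nat.reduceSub, pow_one]; ring)
  have hanti : AntitoneOn h (Set.Icc (0:ℝ) 1) := by
    apply antitoneOn_of_deriv_nonpos (convex_Icc 0 1)
    · exact fun t _ => (hd t).continuousAt.continuousWithinAt
    · exact fun t _ => (hd t).differentiableAt.differentiableWithinAt
    · intro t ht
      rw [interior_Icc] at ht
      rw [(hd t).deriv]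
      have h2 : ⟪gradient φ (x + t • v) - gradient φ x, v⟫ ≤
          ‖gradient φ (x + t • v) - gradient φ x‖ * ‖v‖ := real_inner_le_norm _ _
      have h3 : ‖gradient φ (x + t • v) - gradient φ x‖ ≤ L * (t * ‖v‖) := by
        have := hlip (x + t • v) x
        simpa [norm_smul, abs_of_pos ht.1, mul_assoc] using this
      rw [inner_sub_left] at h2
      nlinarith [norm_nonneg v, ht.1.le, mul_le_mul_of_nonneg_right h3 (norm_nonneg v)]
  have := hanti (Set.left_mem_Icc.2 zero_le_one) (Set.right_mem_Icc.2 zero_le_one) zero_le_one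
  simp only [hh, one_smul, zero_smul, add_zero, one_mul, zero_pow, one_pow, mul_zero,
    mul_one, zero_mul, sub_zero] at this
  linarith

/-- Spectral bounds for the inverse of a positive-definite Hermitian matrix with
eigenvalues in `[a, b]`. -/
lemma stmt4_spec_bounds {n : ℕ} (B : Matrix (Fin n) (Fin n) ℝ) (hB : B.IsHermitian)
    (hPD : B.PosDef) (a b : ℝ) (ha : 0 < a)
    (heig : ∀ i, a ≤ hB.eigenvalues i ∧ hB.eigenvalues i ≤ b)
    (g : EuclideanSpace ℝ (Fin n)) :
    (1/b) * ‖g‖^2 ≤ ⟪Matrix.toEuclideanLin B⁻¹ g, g⟫ ∧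
      ‖Matrix.toEuclideanLin B⁻¹ g‖ ≤ (1/a) * ‖g‖ := by
  classical
  set T := Matrix.toEuclideanLin B⁻¹ with hT
  set e := hB.eigenvectorBasis with he
  set lam := hB.eigenvalues with hlam
  have hlampos : ∀ i, 0 < lam i := fun i => lt_of_lt_of_le ha (heig i).1
  have hdet : IsUnit B.det := hPD.det_pos.ne'.isUnit
  have hTe : ∀ j, T (e j) = (lam j)⁻¹ • e j := by
    intro j
    have h1 : B *ᵥ ⇑(e j) = lam j • ⇑(e j) := hB.mulVec_eigenvectorBasis j
    have h2 : B⁻¹ *ᵥ (B *ᵥ ⇑(e j)) = ⇑(e j) := by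
      rw [Matrix.mulVec_mulVec, Matrix.nonsing_inv_mul _ hdet, Matrix.one_mulVec]
    rw [h1, Matrix.mulVec_smul] at h2
    have h3 : B⁻¹ *ᵥ ⇑(e j) = (lam j)⁻¹ • ⇑(e j) := by
      rw [eq_comm, inv_smul_eq_iff₀ (hlampos j).ne', h2]
    apply (WithLp.equiv 2 (Fin n → ℝ)).injective
    simpa [hT, Matrix.toEuclideanLin_apply] using h3
  have hsymm : (Matrix.toEuclideanLin B⁻¹).IsSymmetric :=
    Matrix.isHermitian_iff_isSymmetric.1 hB.inv
  have hrepr : ∀ i, e.repr (T g) i = (lam i)⁻¹ * e.repr g i := by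
    intro i
    rw [e.repr_apply_apply, e.repr_apply_apply, ← hsymm (e i) g, hTe i,
      real_inner_smul_left]
  have hinner : ⟪T g, g⟫ = ∑ i, (lam i)⁻¹ * (e.repr g i)^2 := by
    rw [← LinearIsometryEquiv.inner_map_map e.repr (T g) g]
    rw [PiLp.inner_apply]
    simp only [RCLike.inner_apply, conj_trivial]
    exact Finset.sum_congr rfl fun i _ => by rw [hrepr i]; ring
  have hng : ‖g‖^2 = ∑ i, (e.repr g i)^2 := by
    rw [← e.repr.norm_map g, ← real_inner_self_eq_norm_sq, PiLp.inner_apply]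
    simp [sq]
  have hnTg : ‖T g‖^2 = ∑ i, ((lam i)⁻¹ * e.repr g i)^2 := by
    rw [← e.repr.norm_map (T g), ← real_inner_self_eq_norm_sq, PiLp.inner_apply]
    simp only [RCLike.inner_apply, conj_trivial]
    exact Finset.sum_congr rfl fun i _ => by rw [hrepr i]; ring
  constructor
  · rw [hinner, hng, Finset.mul_sum]
    apply Finset.sum_le_sum
    intro i _
    have : 1/b ≤ (lam i)⁻¹ := by
      rw [one_div]
      exact inv_anti₀ (hlampos i) (heig i).2
    nlinarith [sq_nonneg (e.repr g i)]
  · have hsq : ‖T g‖^2 ≤ ((1/a) * ‖g‖)^2 := by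
      rw [hnTg, mul_pow, hng, Finset.mul_sum]
      apply Finset.sum_le_sum
      intro i _
      have h1 : (lam i)⁻¹ ≤ 1/a := by
        rw [one_div]
        exact inv_anti₀ ha (heig i).1
      have h2 : 0 ≤ (lam i)⁻¹ := (inv_pos.2 (hlampos i)).le
      have h3 : ((lam i)⁻¹)^2 ≤ (1/a)^2 := pow_le_pow_left₀ h2 h1 2
      nlinarith [sq_nonneg (e.repr g i)]
    have h1a : (0:ℝ) ≤ (1/a) * ‖g‖ := by positivity
    nlinarith [norm_nonneg (T g)]

/-- The scalar inequality at the heart of Statement 4. -/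
lemma stmt4_arith (L σlb σub K θ η α nd ng nG p q : ℝ)
    (hL : 0 < L) (hσub0 : 0 < σub)
    (hθ1 : θ < 1) (hη0 : 0 < η) (hη1 : η < 1)
    (hα0 : 0 < α)
    (hnd : 0 ≤ nd) (hng : 0 ≤ ng)
    (hlow : σlb * ng^2 ≤ p) (hupp : nd ≤ σub * ng)
    (hA3 : p - nd * (η * nG) ≤ q)
    (hA4 : (1-η) * nG ≤ ng)
    (hA5 : α * (L * σub * (1-η)) ≤ 2 * ((1-θ)*(1-η)*K - η))
    (hKσ : K * σub = σlb) :
    L / 2 * (α^2 * nd^2) ≤ α * q - α * θ * p := by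
  have h1η : (0:ℝ) < 1 - η := by linarith
  have h1θ : (0:ℝ) < 1 - θ := by linarith
  have hmain : (1 - η) * (L / 2 * (α * nd^2)) ≤ (1 - η) * (q - θ * p) := by
    have hdsq : nd^2 ≤ σub^2 * ng^2 := by nlinarith
    have hF2 : (1 - η) * (L / 2 * (α * (σub^2 * ng^2))) ≤
        ((1 - θ) * (1 - η) * σlb - η * σub) * ng^2 := by
      have h1 := mul_le_mul_of_nonneg_right hA5 (mul_nonneg hσub0.le (sq_nonneg ng))
      have h2 : ((1-θ)*(1-η)*σlb - η*σub) * ng^2 =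
          2*((1-θ)*(1-η)*K - η) * (σub * ng^2) / 2 := by rw [← hKσ]; ring
      have h3 : (1 - η) * (L / 2 * (α * (σub^2 * ng^2))) =
          α * (L * σub * (1-η)) * (σub * ng^2) / 2 := by ring
      linarith
    have hGub : nd * (η * nG) * (1 - η) ≤ η * σub * ng^2 := by
      have h1 : nd * (η * ((1 - η) * nG)) ≤ nd * (η * ng) :=
        mul_le_mul_of_nonneg_left (mul_le_mul_of_nonneg_left hA4 hη0.le) hnd
      have h2 : nd * (η * ng) ≤ σub * ng * (η * ng) :=
        mul_le_mul_of_nonneg_right hupp (by positivity)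
      nlinarith
    have hF3 : (1 - θ) * (1 - η) * σlb * ng^2 ≤ (1 - θ) * (1 - η) * p := by
      nlinarith [mul_le_mul_of_nonneg_left hlow (mul_nonneg h1θ.le h1η.le)]
    have hstep : (1 - η) * (L / 2 * (α * nd^2)) ≤ (1 - η) * (L / 2 * (α * (σub^2 * ng^2))) := by
      nlinarith [mul_le_mul_of_nonneg_left hdsq (by positivity : (0:ℝ) ≤ (1-η) * (L/2) * α)]
    linarith [hstep, hF2, hF3, hGub, mul_le_mul_of_nonneg_left hA3 h1η.le]
  have h2 : L / 2 * (α * nd^2) ≤ q - θ * p :=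
    le_of_mul_le_mul_left (by linarith) h1η
  nlinarith [mul_le_mul_of_nonneg_left h2 hα0.le]

/-- With `K := σlb/σub`, if `(1 − θ)(1 − η)K − η > 0`,
`‖g − ∇φ(x)‖ ≤ η ‖∇φ(x)‖` and `0 < α ≤ 2((1 − θ)(1 − η)K − η)/(L σub (1 − η))`, then
`φ(x − α d) ≤ φ(x) − α θ ⟨d, g⟩` where `d := B⁻¹ g`. -/
theorem stmt4 {n : ℕ} (hn : 1 ≤ n)
    (φ : EuclideanSpace ℝ (Fin n) → ℝ) (hφ : ContDiff ℝ 1 φ)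
    (L : ℝ) (hL : 0 < L)
    (hlip : ∀ a b, ‖gradient φ a - gradient φ b‖ ≤ L * ‖a - b‖)
    (B : Matrix (Fin n) (Fin n) ℝ) (hB : B.IsHermitian) (hPD : B.PosDef)
    (σlbB σubB σlb σub K : ℝ) (h0 : 0 < σlbB) (hord : σlbB ≤ σubB)
    (heig : ∀ i, σlbB ≤ hB.eigenvalues i ∧ hB.eigenvalues i ≤ σubB)
    (hσlb : σlb = 1 / σubB) (hσub : σub = 1 / σlbB) (hK : K = σlb / σub)
    (x g : EuclideanSpace ℝ (Fin n))
    (θ : ℝ) (hθ : θ ∈ Set.Ioo (0 : ℝ) 1)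
    (η : ℝ) (hη : η ∈ Set.Ioo (0 : ℝ) 1)
    (hpos : 0 < (1 - θ) * (1 - η) * K - η)
    (α : ℝ) (hα0 : 0 < α)
    (hg : ‖g - gradient φ x‖ ≤ η * ‖gradient φ x‖)
    (hαub : α ≤ 2 * ((1 - θ) * (1 - η) * K - η) / (L * σub * (1 - η))) :
    φ (x - α • Matrix.toEuclideanLin B⁻¹ g) ≤
      φ x - α * θ * ⟪Matrix.toEuclideanLin B⁻¹ g, g⟫ := by
  obtain ⟨hθ0, hθ1⟩ := hθ
  obtain ⟨hη0, hη1⟩ := hη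
  have hσubB : 0 < σubB := lt_of_lt_of_le h0 hord
  have hσub0 : 0 < σub := by rw [hσub]; positivity
  have hσlb0 : 0 < σlb := by rw [hσlb]; positivity
  set d := Matrix.toEuclideanLin B⁻¹ g with hdd
  set G := gradient φ x with hG
  obtain ⟨hlow, hupp⟩ := stmt4_spec_bounds B hB hPD σlbB σubB h0 heig g
  rw [← hσlb] at hlow
  rw [← hσub] at hupp
  rw [← hdd] at hlow hupp
  have hA3 : ⟪d, g⟫ - ‖d‖ * (η * ‖G‖) ≤ ⟪G, d⟫ := by
    have h1 : ⟪d, g - G⟫ ≤ ‖d‖ * (η * ‖G‖) := by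
      calc ⟪d, g - G⟫ ≤ ‖d‖ * ‖g - G‖ := real_inner_le_norm _ _
        _ ≤ ‖d‖ * (η * ‖G‖) := mul_le_mul_of_nonneg_left hg (norm_nonneg d)
    have h2 : ⟪d, G⟫ = ⟪d, g⟫ - ⟪d, g - G⟫ := by rw [inner_sub_right]; ring
    rw [real_inner_comm G d] at h2
    linarith
  have hA4 : (1 - η) * ‖G‖ ≤ ‖g‖ := by
    have h1 : ‖G‖ - ‖g‖ ≤ ‖g - G‖ := by
      rw [norm_sub_rev]
      linarith [norm_sub_norm_le G g]
    nlinarith [norm_nonneg G]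
  have hA5 : α * (L * σub * (1 - η)) ≤ 2 * ((1 - θ) * (1 - η) * K - η) := by
    have hden : (0:ℝ) < L * σub * (1 - η) :=
      mul_pos (mul_pos hL hσub0) (by linarith)
    rw [← le_div_iff₀ hden]
    exact hαub
  have hKσ : K * σub = σlb := by rw [hK]; field_simp
  have hdes := stmt4_descent φ hφ L hlip x (-(α • d))
  rw [← sub_eq_add_neg] at hdes
  have hin : ⟪G, -(α • d)⟫ = -(α * ⟪G, d⟫) := by
    rw [inner_neg_right, real_inner_smul_right]
  have hnr : ‖-(α • d)‖ ^ 2 = α^2 * ‖d‖^2 := by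
    rw [norm_neg, norm_smul, mul_pow, Real.norm_eq_abs, sq_abs]
  rw [← hG, hin, hnr] at hdes
  have hkey := stmt4_arith L σlb σub K θ η α ‖d‖ ‖g‖ ‖G‖ ⟪d, g⟫ ⟪G, d⟫
    hL hσub0 hθ1 hη0 hη1 hα0 (norm_nonneg d) (norm_nonneg g) hlow hupp hA3 hA4 hA5 hKσ
  linarith [hdes, hkey]
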